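/- arXiv:1701.06558 — 9 statements merged into one kernel-verified Lean document; each statement's English description precedes it below -/
import Mathlib

section
/- Let n ≥ 3 be an integer, λ = 4(1 - 1/(n-1)²), and A a complex number with A ≠ 0 and A ≠ 1. Then the polynomial ψ(t) = λ(t^{n-1} - A)² - 4(t^{n-2} - A)(t^n - A) has no multiple roots, i.e., ψ and ψ' have no common zero. -/
theorem stmt_0 (n : ℕ) (hn : 3 ≤ n) (A : ℂ) (hA0 : A ≠ 0) (hA1 : A ≠ 1)
    (lam : ℂ) (hlam : lam = 4 * (1 - 1 / ((n : ℂ) - 1) ^ 2))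
    (ψ : ℂ → ℂ)
    (hψ : ψ = fun t => lam * (t ^ (n - 1) - A) ^ 2 - 4 * (t ^ (n - 2) - A) * (t ^ n - A)) :
    ¬ ∃ t₀ : ℂ, ψ t₀ = 0 ∧ deriv ψ t₀ = 0 := by
  rintro ⟨t, h1, h2⟩
  obtain ⟨m, rfl⟩ : ∃ m, n = m + 3 := ⟨n - 3, by omega⟩
  have hm1 : (m : ℂ) + 1 ≠ 0 := by exact_mod_cast (by omega : m + 1 ≠ 0)
  have hm2 : (m : ℂ) + 2 ≠ 0 := by exact_mod_cast (by omega : m + 2 ≠ 0)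
  have hm3 : (m : ℂ) + 3 ≠ 0 := by exact_mod_cast (by omega : m + 3 ≠ 0)
  rw [hψ] at h1 h2
  simp only [show m + 3 - 1 = m + 2 from rfl, show m + 3 - 2 = m + 1 from rfl] at h1 h2
  -- compute the derivative
  have hD : HasDerivAt
      (fun s : ℂ => lam * (s ^ (m + 2) - A) ^ 2 - 4 * (s ^ (m + 1) - A) * (s ^ (m + 3) - A))
      (lam * (((2 : ℕ) : ℂ) * (t ^ (m + 2) - A) ^ 1 * (((m + 2 : ℕ) : ℂ) * t ^ (m + 1)))
        - ((4 * (((m + 1 : ℕ) : ℂ) * t ^ m)) * (t ^ (m + 3) - A)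
            + (4 * (t ^ (m + 1) - A)) * (((m + 3 : ℕ) : ℂ) * t ^ (m + 2)))) t := by
    exact ((((hasDerivAt_pow (m + 2) t).sub_const A).pow 2).const_mul lam).sub
      ((((hasDerivAt_pow (m + 1) t).sub_const A).const_mul 4).mul
        ((hasDerivAt_pow (m + 3) t).sub_const A))
  rw [hD.deriv] at h2
  push_cast at h2 hlam
  -- lam * (m+2)^2 = 4*(m+2)^2 - 4
  have hlam' : lam * ((m : ℂ) + 2) ^ 2 = 4 * ((m : ℂ) + 2) ^ 2 - 4 := by
    have e : (m : ℂ) + 3 - 1 ≠ 0 := by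
      intro h; exact hm2 (by linear_combination h)
    rw [hlam]; field_simp; ring
  -- main algebraic chain
  have hVW : ((m : ℂ) + 2) ^ 2 * ((t ^ (m + 1) - A) * (t ^ (m + 3) - A))
      = (((m : ℂ) + 2) ^ 2 - 1) * (t ^ (m + 2) - A) ^ 2 := by
    linear_combination (-(((m : ℂ) + 2) ^ 2) / 4) * h1 + ((t ^ (m + 2) - A) ^ 2 / 4) * hlam'
  have hSum : A * ((m : ℂ) + 2) ^ 2 * ((t ^ (m + 1) - A) + (t ^ (m + 3) - A))
      = (t ^ (m + 2) - A) ^ 2 + 2 * A * ((m : ℂ) + 2) ^ 2 * (t ^ (m + 2) - A) := by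
    linear_combination (-1 : ℂ) * hVW
  have hLin : A * (2 * (((m : ℂ) + 2) ^ 2 - 1) * (t ^ (m + 2) - A))
      = A * (((m : ℂ) + 2) * (((m : ℂ) + 1) * (t ^ (m + 3) - A)
          + ((m : ℂ) + 3) * (t ^ (m + 1) - A))) := by
    linear_combination (t * ((m : ℂ) + 2) / 4) * h2
      - (((t ^ (m + 2) - A) ^ 2 + A * (t ^ (m + 2) - A)) / 2) * hlam' + 2 * hVW
  have hLin2 : 2 * (((m : ℂ) + 2) ^ 2 - 1) * (t ^ (m + 2) - A)
      = ((m : ℂ) + 2) * (((m : ℂ) + 1) * (t ^ (m + 3) - A)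
          + ((m : ℂ) + 3) * (t ^ (m + 1) - A)) := mul_left_cancel₀ hA0 hLin
  have hv : 2 * A * ((m : ℂ) + 2) ^ 2 * (t ^ (m + 1) - A)
      = ((m : ℂ) + 1) * (t ^ (m + 2) - A) * (2 * A * ((m : ℂ) + 2) - (t ^ (m + 2) - A)) := by
    linear_combination (-((m : ℂ) + 1)) * hSum + (-(A * ((m : ℂ) + 2))) * hLin2
  have hw : 2 * A * ((m : ℂ) + 2) ^ 2 * (t ^ (m + 3) - A)
      = ((m : ℂ) + 3) * (t ^ (m + 2) - A) * (2 * A * ((m : ℂ) + 2) + (t ^ (m + 2) - A)) := by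
    linear_combination (((m : ℂ) + 3)) * hSum + (A * ((m : ℂ) + 2)) * hLin2
  have hu4 : (((m : ℂ) + 1) * ((m : ℂ) + 3)) * (t ^ (m + 2) - A) ^ 4 = 0 := by
    linear_combination (2 * A * ((m : ℂ) + 2) ^ 2 * (t ^ (m + 3) - A)) * hv
      + (((m : ℂ) + 1) * (t ^ (m + 2) - A) * (2 * A * ((m : ℂ) + 2) - (t ^ (m + 2) - A))) * hw
      - 4 * A ^ 2 * ((m : ℂ) + 2) ^ 2 * hVW
  have hu : t ^ (m + 2) - A = 0 := by
    have h4 : (t ^ (m + 2) - A) ^ 4 = 0 := by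
      rcases mul_eq_zero.mp hu4 with h | h
      · exact absurd h (mul_ne_zero hm1 hm3)
      · exact h
    exact pow_eq_zero_iff (by norm_num) |>.mp h4
  have hv0 : t ^ (m + 1) - A = 0 := by
    rw [hu] at hv
    have : 2 * A * ((m : ℂ) + 2) ^ 2 ≠ 0 := by
      apply mul_ne_zero (mul_ne_zero (by norm_num) hA0) (pow_ne_zero _ hm2)
    have h0 : 2 * A * ((m : ℂ) + 2) ^ 2 * (t ^ (m + 1) - A) = 0 := by
      rw [hv]; ring
    exact (mul_eq_zero.mp h0).resolve_left this
  have e1 : t ^ (m + 2) = A := by linear_combination hu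
  have e2 : t ^ (m + 1) = A := by linear_combination hv0
  have ht1 : A * t = A * 1 := by
    linear_combination e1 - t * e2
  have ht : t = 1 := mul_left_cancel₀ hA0 ht1
  rw [ht, one_pow] at e2
  exact hA1 e2.symm
end

section
/- Let n ≥ 3 and λ = 4(1 - 1/(n-1)²). Then t = 1 is a zero of multiplicity exactly 4 of the polynomial ψ(t) = λ(t^{n-1} - 1)² - 4(t^{n-2} - 1)(t^n - 1). -/
open Polynomial Finset

private lemma evalD (a k : ℕ) :
    (derivative^[k] (X ^ a : ℂ[X])).eval 1 = ∏ i ∈ Finset.range k, ((a : ℂ) - i) := by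
  induction k generalizing a with
  | zero => simp
  | succ k ih =>
    rw [Function.iterate_succ_apply, derivative_X_pow]
    rcases Nat.eq_zero_or_pos a with rfl | ha
    · simp [Finset.prod_range_succ']
    · have h2 : derivative^[k] (C (a:ℂ) * X ^ (a-1)) = C (a:ℂ) * derivative^[k] (X ^ (a-1)) := by
        simp [Polynomial.iterate_derivative_C_mul]
      have hc : ((a - 1 : ℕ) : ℂ) = (a : ℂ) - 1 := by
        push_cast [Nat.cast_sub ha]; ring
      rw [h2, eval_mul, eval_C, ih, Finset.prod_range_succ', hc]
      push_cast
      rw [sub_zero, mul_comm]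
      exact congrArg (fun z => z * (a:ℂ)) (Finset.prod_congr rfl fun x _ => by ring)

private lemma evalD1 (a k : ℕ) :
    (derivative^[k] (X ^ a - 1 : ℂ[X])).eval 1
      = if k = 0 then 0 else ∏ i ∈ Finset.range k, ((a : ℂ) - i) := by
  rcases Nat.eq_zero_or_pos k with rfl | hk
  · simp
  · rw [if_neg hk.ne']
    have : derivative^[k] (X ^ a - 1 : ℂ[X]) = derivative^[k] (X ^ a : ℂ[X]) := by
      obtain ⟨k', rfl⟩ := Nat.exists_eq_succ_of_ne_zero hk.ne'
      rw [Function.iterate_succ_apply, Function.iterate_succ_apply]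
      congr 1
      simp
    rw [this, evalD]

private lemma evalProd (a b k : ℕ) :
    (derivative^[k] ((X ^ a - 1) * (X ^ b - 1) : ℂ[X])).eval 1
      = ∑ i ∈ Finset.range (k+1), (k.choose i : ℂ) *
          ((if k - i = 0 then 0 else ∏ j ∈ Finset.range (k-i), ((a : ℂ) - j)) *
           (if i = 0 then 0 else ∏ j ∈ Finset.range i, ((b : ℂ) - j))) := by
  rw [Polynomial.iterate_derivative_mul, eval_finset_sum]
  refine Finset.sum_congr rfl fun i _ => ?_
  rw [eval_smul, eval_mul, evalD1, evalD1, nsmul_eq_mul]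

theorem stmt_2 (n : ℕ) (hn : 3 ≤ n)
    (lam : ℂ) (hlam : lam = 4 * (1 - 1 / ((n : ℂ) - 1) ^ 2))
    (ψ : Polynomial ℂ)
    (hψ : ψ = C lam * (X ^ (n - 1) - 1) ^ 2 - 4 * (X ^ (n - 2) - 1) * (X ^ n - 1)) :
    (X - C 1) ^ 4 ∣ ψ ∧ ¬ (X - C 1) ^ 5 ∣ ψ := by
  have hψ' : ψ = C lam * ((X ^ (n-1) - 1) * (X ^ (n-1) - 1))
      - C 4 * ((X ^ (n-2) - 1) * (X ^ n - 1)) := by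
    rw [hψ]; ring_nf; rw [map_ofNat]; ring
  set N : ℂ := (n : ℂ) with hN
  have hc1 : ((n - 1 : ℕ) : ℂ) = N - 1 := by
    push_cast [Nat.cast_sub (by omega : 1 ≤ n)]; ring
  have hc2 : ((n - 2 : ℕ) : ℂ) = N - 2 := by
    push_cast [Nat.cast_sub (by omega : 2 ≤ n)]; ring
  have hN1 : N - 1 ≠ 0 := by
    show (n:ℂ) - 1 ≠ 0
    exact sub_ne_zero.mpr (by exact_mod_cast (by omega : n ≠ 1))
  have hN0 : N ≠ 0 := Nat.cast_ne_zero.mpr (by omega)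
  have hN2 : N - 2 ≠ 0 := by
    show (n:ℂ) - 2 ≠ 0
    exact sub_ne_zero.mpr (by exact_mod_cast (by omega : n ≠ 2))
  have key : ∀ k, (derivative^[k] ψ).eval 1 =
      lam * (∑ i ∈ Finset.range (k+1), (k.choose i : ℂ) *
          ((if k - i = 0 then 0 else ∏ j ∈ Finset.range (k-i), (N - 1 - j)) *
           (if i = 0 then 0 else ∏ j ∈ Finset.range i, (N - 1 - j))))
      - 4 * (∑ i ∈ Finset.range (k+1), (k.choose i : ℂ) *
          ((if k - i = 0 then 0 else ∏ j ∈ Finset.range (k-i), (N - 2 - j)) *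
           (if i = 0 then 0 else ∏ j ∈ Finset.range i, (N - j)))) := by
    intro k
    rw [hψ', iterate_derivative_sub, iterate_derivative_C_mul, iterate_derivative_C_mul,
      eval_sub, eval_mul, eval_mul, eval_C, eval_C, evalProd, evalProd, hc1, hc2]
  have e0 : (derivative^[0] ψ).eval 1 = 0 := by
    rw [key]; norm_num
  have e1 : (derivative^[1] ψ).eval 1 = 0 := by
    rw [key]
    norm_num [Finset.sum_range_succ, Finset.prod_range_succ, Nat.choose]
  have e2 : (derivative^[2] ψ).eval 1 = 0 := by
    rw [key, hlam]
    norm_num [Finset.sum_range_succ, Finset.prod_range_succ, Nat.choose]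
    field_simp
    ring
  have e3 : (derivative^[3] ψ).eval 1 = 0 := by
    rw [key, hlam]
    norm_num [Finset.sum_range_succ, Finset.prod_range_succ, Nat.choose]
    field_simp
    ring
  have e4 : (derivative^[4] ψ).eval 1 = -8 * N * (N - 2) := by
    rw [key, hlam]
    norm_num [Finset.sum_range_succ, Finset.prod_range_succ, Nat.choose]
    field_simp
    ring
  have e4ne : (derivative^[4] ψ).eval 1 ≠ 0 := by
    rw [e4]
    exact mul_ne_zero (mul_ne_zero (by norm_num) hN0) hN2
  have hψ0 : ψ ≠ 0 := by
    intro h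
    apply e4ne
    simp [h]
  have hlt : 3 < ψ.rootMultiplicity 1 := by
    rw [lt_rootMultiplicity_iff_isRoot_iterate_derivative hψ0]
    intro m hm
    interval_cases m
    · exact e0
    · exact e1
    · exact e2
    · exact e3
  have hle : ψ.rootMultiplicity 1 ≤ 4 := by
    by_contra h
    push_neg at h
    exact e4ne (((lt_rootMultiplicity_iff_isRoot_iterate_derivative hψ0).mp h) 4 le_rfl)
  constructor
  · exact (le_rootMultiplicity_iff hψ0).mp hlt
  · intro h
    have := (le_rootMultiplicity_iff hψ0).mpr h
    omega
end

section
/- Let n ≥ 3 and λ = 4(1 - 1/(n-1)²), and let ψ(t) = λ(t^{n-1} - 1)² - 4(t^{n-2} - 1)(t^n - 1). Then every zero of ψ other than t = 1 is a simple zero. -/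
theorem stmt_3 (n : ℕ) (hn : 3 ≤ n)
    (lam : ℂ) (hlam : lam = 4 * (1 - 1 / ((n : ℂ) - 1) ^ 2))
    (ψ : ℂ → ℂ)
    (hψ : ψ = fun t => lam * (t ^ (n - 1) - 1) ^ 2 - 4 * (t ^ (n - 2) - 1) * (t ^ n - 1))
    (t₀ : ℂ) (ht₀ : t₀ ≠ 1) (h : ψ t₀ = 0) :
    deriv ψ t₀ ≠ 0 := by
  obtain ⟨k, rfl⟩ : ∃ k, n = k + 3 := ⟨n - 3, by omega⟩
  set c : ℂ := (k : ℂ) with hc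
  have hc2 : c + 2 ≠ 0 := by
    have : ((k + 2 : ℕ) : ℂ) ≠ 0 := Nat.cast_ne_zero.mpr (by omega)
    push_cast at this; exact this
  have hc1 : c + 1 ≠ 0 := by
    have : ((k + 1 : ℕ) : ℂ) ≠ 0 := Nat.cast_ne_zero.mpr (by omega)
    push_cast at this; exact this
  have hc3 : c + 3 ≠ 0 := by
    have : ((k + 3 : ℕ) : ℂ) ≠ 0 := Nat.cast_ne_zero.mpr (by omega)
    push_cast at this; exact this
  have h4 : (4 / (c + 2) ^ 2 : ℂ) ≠ 0 :=
    div_ne_zero (by norm_num) (pow_ne_zero 2 hc2)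
  have hψg : ψ = fun t => 4 / (c + 2) ^ 2 *
      ((c + 2) ^ 2 * t ^ (k + 1) * (t - 1) ^ 2 - (t ^ (k + 2) - 1) ^ 2) := by
    rw [hψ, hlam]
    funext t
    have h1 : (k + 3 - 1 : ℕ) = k + 2 := by omega
    have h2 : (k + 3 - 2 : ℕ) = k + 1 := by omega
    rw [h1, h2]
    have h3 : ((k + 3 : ℕ) : ℂ) - 1 = c + 2 := by push_cast; ring
    rw [h3]
    have e1 : (t : ℂ) ^ (k + 2) = t ^ k * t ^ 2 := by ring
    have e2 : (t : ℂ) ^ (k + 1) = t ^ k * t := by ring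
    have e3 : (t : ℂ) ^ (k + 3) = t ^ k * t ^ 3 := by ring
    rw [e1, e2, e3]
    field_simp
    ring
  rw [hψg] at h ⊢
  intro h0
  have hd : HasDerivAt (fun t : ℂ => 4 / (c + 2) ^ 2 *
      ((c + 2) ^ 2 * t ^ (k + 1) * (t - 1) ^ 2 - (t ^ (k + 2) - 1) ^ 2))
      (4 / (c + 2) ^ 2 * ((c + 2) ^ 2 * (((k : ℂ) + 1) * t₀ ^ k) * (t₀ - 1) ^ 2
        + (c + 2) ^ 2 * t₀ ^ (k + 1) * (2 * (t₀ - 1))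
        - 2 * (t₀ ^ (k + 2) - 1) * (((k : ℂ) + 2) * t₀ ^ (k + 1)))) t₀ := by
    have p1 : HasDerivAt (fun t : ℂ => t ^ (k + 1)) (((k : ℂ) + 1) * t₀ ^ k) t₀ := by
      simpa using hasDerivAt_pow (k + 1) t₀
    have p2 : HasDerivAt (fun t : ℂ => (t - 1) ^ 2) (2 * (t₀ - 1)) t₀ := by
      simpa using ((hasDerivAt_id t₀).sub_const 1).fun_pow 2
    have q : HasDerivAt (fun t : ℂ => (t ^ (k + 2) - 1) ^ 2)
        (2 * (t₀ ^ (k + 2) - 1) * (((k : ℂ) + 2) * t₀ ^ (k + 1))) t₀ := by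
      have q0 : HasDerivAt (fun t : ℂ => t ^ (k + 2)) (((k : ℂ) + 2) * t₀ ^ (k + 1)) t₀ := by
        simpa using hasDerivAt_pow (k + 2) t₀
      simpa using (q0.sub_const 1).fun_pow 2
    exact (((p1.const_mul ((c + 2) ^ 2)).mul p2).sub q).const_mul (4 / (c + 2) ^ 2)
  rw [hd.deriv] at h0
  -- extract the polynomial equations
  have ha : (c + 2) ^ 2 * t₀ ^ (k + 1) * (t₀ - 1) ^ 2 - (t₀ ^ (k + 2) - 1) ^ 2 = 0 :=
    (mul_eq_zero.mp h).resolve_left h4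
  have hb : (c + 2) ^ 2 * ((c + 1) * t₀ ^ k) * (t₀ - 1) ^ 2
        + (c + 2) ^ 2 * t₀ ^ (k + 1) * (2 * (t₀ - 1))
        - 2 * (t₀ ^ (k + 2) - 1) * ((c + 2) * t₀ ^ (k + 1)) = 0 :=
    (mul_eq_zero.mp h0).resolve_left h4
  have ht : t₀ ≠ 0 := by
    intro h00
    rw [h00] at ha
    simp [zero_pow] at ha
  have hP : t₀ ^ (k + 1) ≠ 0 := pow_ne_zero _ ht
  have hfac : t₀ ^ (k + 1) * ((c + 2) * ((c + 2) * (t₀ - 1) * ((c + 3) * t₀ - (c + 1))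
      - 2 * t₀ * (t₀ ^ (k + 2) - 1))) = 0 := by
    linear_combination t₀ * hb
  have hs : (c + 2) * (t₀ - 1) * ((c + 3) * t₀ - (c + 1)) - 2 * t₀ * (t₀ ^ (k + 2) - 1) = 0 :=
    (mul_eq_zero.mp ((mul_eq_zero.mp hfac).resolve_left hP)).resolve_left hc2
  have key : (c + 2) ^ 2 * ((c + 1) * (c + 3)) * (t₀ - 1) ^ 4 = 0 := by
    linear_combination 4 * t₀ ^ 2 * ha +
      (2 * (c + 2) ^ 2 * (t₀ - 1) ^ 2 - 2 * t₀ * (t₀ ^ (k + 2) - 1)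
        - (c + 2) * (t₀ - 1) * ((c + 3) * t₀ - (c + 1))) * hs
  have ht1 : t₀ - 1 ≠ 0 := sub_ne_zero.mpr ht₀
  exact (mul_ne_zero (mul_ne_zero (pow_ne_zero 2 hc2) (mul_ne_zero hc1 hc3))
    (pow_ne_zero 4 ht1)) key
end

section
/- Let m, n be positive integers and a, b ∈ ℂ with a ≠ b. Let Q(z) = Σ_{i=0}^{m} Σ_{j=0}^{n} C(m,i)·C(n,j)·((-1)^{i+j}/(n+m+1-i-j))·z^{n+m+1-i-j}·a^j·b^i and P(z) = Q(z) + c. Then P(a) ≠ P(b), i.e., P is injective on the set {a, b} of distinct critical points of P. -/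
set_option maxHeartbeats 1000000 in
open intervalIntegral in
theorem stmt_5 (m n : ℕ) (hm : 0 < m) (hn : 0 < n) (a b c : ℂ) (hab : a ≠ b)
    (Q : ℂ → ℂ)
    (hQ : Q = fun z => ∑ i ∈ Finset.range (m + 1), ∑ j ∈ Finset.range (n + 1),
      (m.choose i : ℂ) * (n.choose j : ℂ) *
        ((-1) ^ (i + j) / ((n + m + 1 - i - j : ℕ) : ℂ)) *
        z ^ (n + m + 1 - i - j) * a ^ j * b ^ i)
    (P : ℂ → ℂ) (hP : P = fun z => Q z + c) :
    P a ≠ P b := by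
  -- Step 1: Q' z = (z - b)^m * (z - a)^n
  have hderiv : ∀ z : ℂ, HasDerivAt Q ((z - b) ^ m * (z - a) ^ n) z := by
    intro z
    have expand : (z - b) ^ m * (z - a) ^ n =
        ∑ i ∈ Finset.range (m + 1), ∑ j ∈ Finset.range (n + 1),
          (m.choose i : ℂ) * (n.choose j : ℂ) * (-1) ^ (i + j) *
            z ^ (n + m + 1 - i - j - 1) * a ^ j * b ^ i := by
      rw [show z - b = -b + z from (neg_add_eq_sub b z).symm,
        show z - a = -a + z from (neg_add_eq_sub a z).symm, add_pow, add_pow,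
        Finset.sum_mul_sum]
      refine Finset.sum_congr rfl fun i hi => Finset.sum_congr rfl fun j hj => ?_
      rw [Finset.mem_range] at hi hj
      have hi' : i ≤ m := Nat.lt_succ_iff.mp hi
      have hj' : j ≤ n := Nat.lt_succ_iff.mp hj
      have he : n + m + 1 - i - j - 1 = (m - i) + (n - j) := by omega
      rw [he, neg_pow b, neg_pow a, pow_add (-1 : ℂ), pow_add z]
      ring
    rw [hQ, expand]
    refine HasDerivAt.fun_sum (𝕜 := ℂ) (F := ℂ) fun i hi => HasDerivAt.fun_sum (𝕜 := ℂ) (F := ℂ) fun j hj => ?_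
    rw [Finset.mem_range] at hi hj
    have hi' : i ≤ m := Nat.lt_succ_iff.mp hi
    have hj' : j ≤ n := Nat.lt_succ_iff.mp hj
    have he1 : 1 ≤ n + m + 1 - i - j := by omega
    have hne : ((n + m + 1 - i - j : ℕ) : ℂ) ≠ 0 := by
      simp only [ne_eq, Nat.cast_eq_zero]; omega
    have H := (((hasDerivAt_pow (n + m + 1 - i - j) z).const_mul
        ((m.choose i : ℂ) * (n.choose j : ℂ) * ((-1) ^ (i + j) / ((n + m + 1 - i - j : ℕ) : ℂ)))).mul_const
        (a ^ j)).mul_const (b ^ i)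
    convert H using 1
    · rfl
    field_simp
  -- Step 2: parametrize the segment from b to a
  set N := m + n + 1 with hN
  have hg : ∀ t : ℝ,
      HasDerivAt (fun t : ℝ => Q (b + (t : ℂ) * (a - b)))
        ((a - b) ^ N * (t : ℂ) ^ m * ((t : ℂ) - 1) ^ n) t := by
    intro t
    have inner : HasDerivAt (fun w : ℂ => b + w * (a - b)) (a - b) ((t : ℝ) : ℂ) := by
      simpa using ((hasDerivAt_id ((t : ℝ) : ℂ)).mul_const (a - b)).const_add b
    have comp := ((hderiv (b + (t : ℂ) * (a - b))).comp ((t : ℝ) : ℂ) inner).comp_ofReal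
    convert comp using 1
    · rfl
    have h1 : b + (t : ℂ) * (a - b) - b = (t : ℂ) * (a - b) := by ring
    have h2 : b + (t : ℂ) * (a - b) - a = ((t : ℂ) - 1) * (a - b) := by ring
    rw [h1, h2, mul_pow, mul_pow, hN]
    ring
  -- Step 3: FTC
  have hcont : Continuous fun t : ℝ => (a - b) ^ N * (t : ℂ) ^ m * ((t : ℂ) - 1) ^ n := by
    continuity
  have hftc : (∫ t in (0:ℝ)..1, (a - b) ^ N * (t : ℂ) ^ m * ((t : ℂ) - 1) ^ n)
      = Q (b + (1 : ℂ) * (a - b)) - Q (b + (0 : ℂ) * (a - b)) := by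
    have := intervalIntegral.integral_eq_sub_of_hasDerivAt
      (f := fun t : ℝ => Q (b + (t : ℂ) * (a - b)))
      (f' := fun t : ℝ => (a - b) ^ N * (t : ℂ) ^ m * ((t : ℂ) - 1) ^ n)
      (a := 0) (b := 1) (fun t _ => hg t) (hcont.intervalIntegrable 0 1)
    simpa using this
  have hQab : Q a - Q b =
      (a - b) ^ N * ((∫ t in (0:ℝ)..1, t ^ m * (t - 1) ^ n : ℝ) : ℂ) := by
    have h1 : b + (1 : ℂ) * (a - b) = a := by ring
    have h0 : b + (0 : ℂ) * (a - b) = b := by ring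
    rw [h1, h0] at hftc
    rw [← hftc]
    rw [show (fun t : ℝ => (a - b) ^ N * (t : ℂ) ^ m * ((t : ℂ) - 1) ^ n)
        = fun t : ℝ => (a - b) ^ N * (((t ^ m * (t - 1) ^ n : ℝ) : ℂ)) from by
      funext t; push_cast; ring]
    rw [intervalIntegral.integral_const_mul, intervalIntegral.integral_ofReal]
  -- Step 4: the real integral is nonzero
  have hI : (∫ t in (0:ℝ)..1, t ^ m * (t - 1) ^ n) ≠ 0 := by
    have hpos : 0 < ∫ t in (0:ℝ)..1, t ^ m * (1 - t) ^ n := by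
      apply intervalIntegral_pos_of_pos_on
      · exact ((continuous_id.pow m).mul
          ((continuous_const.sub continuous_id).pow n)).intervalIntegrable 0 1
      · intro x hx
        exact mul_pos (pow_pos hx.1 m) (pow_pos (by linarith [hx.2]) n)
      · norm_num
    have heq : (∫ t in (0:ℝ)..1, t ^ m * (1 - t) ^ n)
        = (-1 : ℝ) ^ n * ∫ t in (0:ℝ)..1, t ^ m * (t - 1) ^ n := by
      rw [← intervalIntegral.integral_const_mul]
      congr 1; funext t
      rw [show (1 - t : ℝ) = -1 * (t - 1) from by ring, mul_pow]
      ring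
    intro h0
    rw [heq, h0, mul_zero] at hpos
    exact lt_irrefl 0 hpos
  -- Conclusion
  have hQne : Q a ≠ Q b := by
    intro h
    have : Q a - Q b = 0 := by rw [h, sub_self]
    rw [hQab] at this
    rcases mul_eq_zero.mp this with h' | h'
    · exact (pow_ne_zero N (sub_ne_zero.mpr hab)) h'
    · exact hI (by exact_mod_cast h')
  rw [hP]
  simpa using hQne
end

section
/- Let m, n be positive integers and a, b ∈ ℂ with a ≠ b, and let P(z) = Σ_{i=0}^{m} Σ_{j=0}^{n} C(m,i)·C(n,j)·((-1)^{i+j}/(n+m+1-i-j))·z^{n+m+1-i-j}·a^j·b^i + c. Then P(z) - P(b) = (z - b)^{m+1}·R(z) for a polynomial R with R(b) ≠ 0, and moreover R has no multiple zeros. -/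
open Polynomial

private lemma npc_stmt6 (k l : ℕ) (h : k % 2 = l % 2) : (-1:ℂ)^k = (-1)^l := by
  rcases Nat.even_or_odd k with hk | hk
  · have hl : Even l := by rw [Nat.even_iff] at *; omega
    rw [hk.neg_one_pow, hl.neg_one_pow]
  · have hl : Odd l := by rw [Nat.odd_iff] at *; omega
    rw [hk.neg_one_pow, hl.neg_one_pow]

private lemma sum_identity_stmt6 (m n : ℕ) (a b z : ℂ) :
    ∑ i ∈ Finset.range (m+1), ∑ j ∈ Finset.range (n+1),
      (m.choose i : ℂ) * n.choose j * (-1)^(i+j) * a^j * b^i * z^(n+m-i-j)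
      = (z-b)^m * (z-a)^n := by
  rw [sub_pow, sub_pow, Finset.sum_mul_sum,
    ← Finset.sum_range_reflect _ (m+1)]
  refine Finset.sum_congr rfl fun i hi => ?_
  rw [← Finset.sum_range_reflect _ (n+1)]
  refine Finset.sum_congr rfl fun j hj => ?_
  simp only [Finset.mem_range] at hi hj
  have hi' : i ≤ m := by omega
  have hj' : j ≤ n := by omega
  rw [show m + 1 - 1 - i = m - i by omega, show n + 1 - 1 - j = n - j by omega,
    Nat.choose_symm hi', Nat.choose_symm hj',
    show n + m - (m - i) - (n - j) = i + j by omega]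
  have ps : (-1:ℂ) ^ (m - i + (n - j)) = (-1)^(i+m) * (-1)^(j+n) := by
    rw [← pow_add]; exact npc_stmt6 _ _ (by omega)
  rw [ps, pow_add]
  ring

private lemma derivP_stmt6 (m n : ℕ) (a b c : ℂ) (P : Polynomial ℂ)
    (hP : P = (∑ i ∈ Finset.range (m + 1), ∑ j ∈ Finset.range (n + 1),
      C ((m.choose i : ℂ) * (n.choose j : ℂ) *
        ((-1) ^ (i + j) / ((n + m + 1 - i - j : ℕ) : ℂ)) * a ^ j * b ^ i) *
        X ^ (n + m + 1 - i - j)) + C c) :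
    derivative P = (X - C b) ^ m * (X - C a) ^ n := by
  rw [hP, derivative_add, derivative_C, add_zero, derivative_sum]
  simp only [derivative_sum, derivative_C_mul_X_pow]
  apply Polynomial.funext
  intro z
  simp only [eval_finset_sum, eval_mul, eval_C, eval_pow, eval_X, eval_sub]
  rw [← sum_identity_stmt6 m n a b z]
  refine Finset.sum_congr rfl fun i hi => Finset.sum_congr rfl fun j hj => ?_
  simp only [Finset.mem_range] at hi hj
  have hc : ((n + m + 1 - i - j : ℕ) : ℂ) ≠ 0 := Nat.cast_ne_zero.mpr (by omega)
  rw [show n + m + 1 - i - j - 1 = n + m - i - j by omega]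
  field_simp

private lemma evalab_stmt6 (m n : ℕ) (a b : ℂ) (hab : a ≠ b) (P : Polynomial ℂ)
    (hD : derivative P = (X - C b) ^ m * (X - C a) ^ n) :
    P.eval a ≠ P.eval b := by
  set f : ℂ → ℂ := fun z => P.eval (b + z * (a - b)) with hfdef
  have hf : ∀ z : ℂ, HasDerivAt f ((z * (a-b))^m * ((z-1) * (a-b))^n * (a - b)) z := by
    intro z
    have h1 : HasDerivAt (fun z : ℂ => b + z * (a - b)) (a - b) z := by
      simpa using ((hasDerivAt_id z).mul_const (a - b)).const_add b
    have h2 := (P.hasDerivAt (b + z * (a - b))).comp z h1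
    refine h2.congr_deriv ?_
    rw [hD]
    simp only [eval_mul, eval_pow, eval_sub, eval_X, eval_C]
    ring_nf
  have hg : ∀ s : ℝ, HasDerivAt (fun s : ℝ => f s)
      (((s:ℂ) * (a-b))^m * (((s:ℂ)-1) * (a-b))^n * (a - b)) s :=
    fun s => (hf s).comp_ofReal
  have hcont : Continuous fun s : ℝ =>
      (((s:ℂ) * (a-b))^m * (((s:ℂ)-1) * (a-b))^n * (a - b)) := by fun_prop
  have key : f 1 - f 0 = ∫ s in (0:ℝ)..1,
      (((s:ℂ) * (a-b))^m * (((s:ℂ)-1) * (a-b))^n * (a - b)) := by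
    refine (intervalIntegral.integral_eq_sub_of_hasDerivAt (fun s _ => hg s)
      (hcont.intervalIntegrable _ _)).symm
  have hval : f 1 = P.eval a := by simp [hfdef]
  have hval0 : f 0 = P.eval b := by simp [hfdef]
  have hintegrand : ∀ s : ℝ, (((s:ℂ) * (a-b))^m * (((s:ℂ)-1) * (a-b))^n * (a - b))
      = (a-b)^(m+n+1) * ((s^m * (s-1)^n : ℝ) : ℂ) := by
    intro s
    rw [mul_pow, mul_pow]
    push_cast
    ring
  have hK : (0:ℝ) < ∫ s in (0:ℝ)..1, s^m * (1-s)^n := by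
    apply intervalIntegral.intervalIntegral_pos_of_pos_on
    · exact (Continuous.intervalIntegrable (by fun_prop) _ _)
    · intro x hx
      have h1 : 0 < x := hx.1
      have h2 : x < 1 := hx.2
      have h3 : (0:ℝ) < 1 - x := by linarith
      positivity
    · norm_num
  have hJ : (∫ s in (0:ℝ)..1, s^m * (s-1)^n) = (-1)^n * ∫ s in (0:ℝ)..1, s^m * (1-s)^n := by
    have e : ∀ s : ℝ, s^m * (s-1)^n = (-1)^n * (s^m * (1-s)^n) := by
      intro s
      rw [show (s-1:ℝ) = -(1-s) by ring, neg_pow]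
      ring
    simp_rw [e]
    rw [intervalIntegral.integral_const_mul]
  have hcalc : P.eval a - P.eval b = (a-b)^(m+n+1) * ((-1)^n * ∫ s in (0:ℝ)..1, s^m * (1-s)^n : ℝ) := by
    rw [← hval, ← hval0, key]
    simp_rw [hintegrand]
    rw [intervalIntegral.integral_const_mul, intervalIntegral.integral_ofReal, hJ]
  intro h
  rw [h, sub_self] at hcalc
  have h1 : (a - b)^(m+n+1) ≠ 0 := pow_ne_zero _ (sub_ne_zero.mpr hab)
  have h2 : (((-1:ℝ))^n * ∫ s in (0:ℝ)..1, s^m * (1-s)^n) ≠ 0 := by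
    apply mul_ne_zero
    · exact pow_ne_zero _ (by norm_num)
    · exact ne_of_gt hK
  exact (mul_ne_zero h1 (by exact_mod_cast Complex.ofReal_ne_zero.mpr h2)) hcalc.symm

theorem stmt_6 (m n : ℕ) (hm : 0 < m) (hn : 0 < n) (a b c : ℂ) (hab : a ≠ b)
    (P : Polynomial ℂ)
    (hP : P = (∑ i ∈ Finset.range (m + 1), ∑ j ∈ Finset.range (n + 1),
      C ((m.choose i : ℂ) * (n.choose j : ℂ) *
        ((-1) ^ (i + j) / ((n + m + 1 - i - j : ℕ) : ℂ)) * a ^ j * b ^ i) *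
        X ^ (n + m + 1 - i - j)) + C c) :
    ∃ R : Polynomial ℂ,
      P - C (P.eval b) = (X - C b) ^ (m + 1) * R ∧
      R.eval b ≠ 0 ∧
      ∀ z : ℂ, ¬ (X - C z) ^ 2 ∣ R := by
  have hD : derivative P = (X - C b) ^ m * (X - C a) ^ n := derivP_stmt6 m n a b c P hP
  have hPab : P.eval a ≠ P.eval b := evalab_stmt6 m n a b hab P hD
  set F : Polynomial ℂ := P - C (P.eval b) with hFdef
  have hFb : F.IsRoot b := by simp [hFdef, IsRoot]
  have hDne : (X - C b) ^ m * (X - C a) ^ n ≠ 0 :=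
    (((monic_X_sub_C b).pow m).mul ((monic_X_sub_C a).pow n)).ne_zero
  have hF' : derivative F = (X - C b) ^ m * (X - C a) ^ n := by
    rw [hFdef, derivative_sub, derivative_C, sub_zero, hD]
  have hFne : F ≠ 0 := by
    intro h
    rw [h, derivative_zero] at hF'
    exact hDne hF'.symm
  have hmD : rootMultiplicity b ((X - C b) ^ m * (X - C a) ^ n) = m := by
    rw [rootMultiplicity_mul hDne, rootMultiplicity_X_sub_C_pow,
      rootMultiplicity_eq_zero, add_zero]
    simp only [IsRoot, eval_pow, eval_sub, eval_X, eval_C]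
    exact pow_ne_zero _ (sub_ne_zero.mpr (Ne.symm hab))
  have hmF : rootMultiplicity b F = m + 1 := by
    have h1 := derivative_rootMultiplicity_of_root hFb
    rw [hF', hmD] at h1
    have h2 : 0 < rootMultiplicity b F := (rootMultiplicity_pos hFne).mpr hFb
    omega
  set R : Polynomial ℂ := F /ₘ (X - C b) ^ (m+1) with hRdef
  have hfac : F = (X - C b) ^ (m + 1) * R := by
    have := pow_mul_divByMonic_rootMultiplicity_eq F b
    rw [hmF] at this
    exact this.symm
  have hRb : R.eval b ≠ 0 := by
    have := eval_divByMonic_pow_rootMultiplicity_ne_zero b hFne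
    rwa [hmF] at this
  refine ⟨R, hfac, hRb, ?_⟩
  intro z hz
  have hzb : z ≠ b := by
    rintro rfl
    apply hRb
    exact eval_eq_zero_of_dvd_of_eval_eq_zero
      (dvd_trans (dvd_pow_self _ two_ne_zero) hz) (by simp)
  have hdvdF : (X - C z) ^ 2 ∣ F := by
    rw [hfac]
    exact hz.mul_left _
  have h2 : 2 ≤ rootMultiplicity z F := (le_rootMultiplicity_iff hFne).mpr hdvdF
  have hrootz : F.IsRoot z := (rootMultiplicity_pos hFne).mp (by omega)
  have hDz := derivative_rootMultiplicity_of_root hrootz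
  rw [hF'] at hDz
  have hDpos : 0 < rootMultiplicity z ((X - C b) ^ m * (X - C a) ^ n) := by omega
  have hrootD : ((X - C b) ^ m * (X - C a) ^ n).IsRoot z :=
    (rootMultiplicity_pos hDne).mp hDpos
  have hza : z = a := by
    simp only [IsRoot, eval_mul, eval_pow, eval_sub, eval_X, eval_C] at hrootD
    rcases mul_eq_zero.mp hrootD with h | h
    · exact absurd (sub_eq_zero.mp (pow_eq_zero_iff hm.ne'|>.mp h)) hzb
    · exact sub_eq_zero.mp (pow_eq_zero_iff hn.ne'|>.mp h)
  subst hza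
  apply hPab
  have : F.eval z = 0 := hrootz
  rw [hFdef] at this
  simp only [eval_sub, eval_C] at this
  linear_combination this
end

section
/- Let m, n be positive integers, b ∈ ℂ, b ≠ 0, and λ = Σ_{i=0}^{m} C(m,i)·(-1)^i/(n+m+1-i). Let P(z) = Σ_{i=0}^{m} C(m,i)·((-1)^i/(n+m+1-i))·z^{n+m+1-i}·b^i + c. Then P(b) - P(0) = b^{n+m+1}·λ and λ ≠ 0; in particular P(b) ≠ P(0). -/
open intervalIntegral in
lemma mu_eq (m n : ℕ) :
    (∑ i ∈ Finset.range (m + 1), (m.choose i : ℝ) * (-1) ^ i / ((n + m + 1 - i : ℕ) : ℝ))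
      = ∫ x in (0:ℝ)..1, x ^ n * (x - 1) ^ m := by
  have hexp : ∀ x : ℝ, x ^ n * (x - 1) ^ m
      = ∑ i ∈ Finset.range (m + 1), (m.choose i : ℝ) * (-1) ^ i * x ^ (n + m - i) := by
    intro x
    rw [sub_eq_add_neg, add_pow, Finset.mul_sum, ← Finset.sum_range_reflect]
    apply Finset.sum_congr rfl
    intro i hi
    have hi' : i ≤ m := by have := Finset.mem_range.mp hi; omega
    have h1 : m - (m - i) = i := by omega
    have h2 : m + 1 - 1 - i = m - i := by omega
    rw [h2, h1, Nat.choose_symm hi']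
    rw [show n + m - i = n + (m - i) by omega, pow_add]
    ring
  rw [intervalIntegral.integral_congr (g := fun x => ∑ i ∈ Finset.range (m + 1),
      (m.choose i : ℝ) * (-1) ^ i * x ^ (n + m - i)) (fun x _ => hexp x)]
  rw [intervalIntegral.integral_finset_sum
      (f := fun i x => (m.choose i : ℝ) * (-1) ^ i * x ^ (n + m - i)) (fun i _ =>
      ((continuous_const.mul (continuous_pow _)).intervalIntegrable _ _))]
  apply Finset.sum_congr rfl
  intro i hi
  rw [intervalIntegral.integral_const_mul, integral_pow]
  have h1 : n + m + 1 - i = (n + m - i) + 1 := by have := Finset.mem_range.mp hi; omega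
  rw [h1]
  have h2 : ((n + m - i : ℕ) : ℝ) + 1 ≠ 0 := by positivity
  push_cast
  rw [one_pow, zero_pow (by omega : n + m - i + 1 ≠ 0)]
  field_simp
  simp

theorem stmt_7 (m n : ℕ) (hm : 0 < m) (hn : 0 < n) (b c : ℂ) (hb : b ≠ 0)
    (lam : ℂ)
    (hlam : lam = ∑ i ∈ Finset.range (m + 1),
      (m.choose i : ℂ) * (-1) ^ i / ((n + m + 1 - i : ℕ) : ℂ))
    (P : ℂ → ℂ)
    (hP : P = fun z => (∑ i ∈ Finset.range (m + 1),
      (m.choose i : ℂ) * ((-1) ^ i / ((n + m + 1 - i : ℕ) : ℂ)) *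
        z ^ (n + m + 1 - i) * b ^ i) + c) :
    P b - P 0 = b ^ (n + m + 1) * lam ∧ lam ≠ 0 ∧ P b ≠ P 0 := by
  have hP0 : P 0 = c := by
    simp only [hP]
    rw [Finset.sum_eq_zero fun i hi => ?_, zero_add]
    have h0 : n + m + 1 - i ≠ 0 := by have := Finset.mem_range.mp hi; omega
    simp [zero_pow h0]
  have hPb : P b = b ^ (n + m + 1) * lam + c := by
    simp only [hP, hlam, Finset.mul_sum]
    congr 1
    apply Finset.sum_congr rfl
    intro i hi
    have hi' : i ≤ n + m + 1 := by have := Finset.mem_range.mp hi; omega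
    rw [mul_assoc, pow_sub_mul_pow b hi']
    ring
  have hlam0 : lam ≠ 0 := by
    have hcast : lam = ((∑ i ∈ Finset.range (m + 1),
        (m.choose i : ℝ) * (-1) ^ i / ((n + m + 1 - i : ℕ) : ℝ) : ℝ) : ℂ) := by
      rw [hlam, Complex.ofReal_sum]
      apply Finset.sum_congr rfl
      intro i _
      push_cast
      ring
    rw [hcast, mu_eq, Ne, Complex.ofReal_eq_zero]
    have hsign : (∫ x in (0:ℝ)..1, x ^ n * (x - 1) ^ m)
        = (-1) ^ m * ∫ x in (0:ℝ)..1, x ^ n * (1 - x) ^ m := by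
      rw [← intervalIntegral.integral_const_mul]
      apply intervalIntegral.integral_congr
      intro x _
      have : (x - 1) ^ m = (-1) ^ m * (1 - x) ^ m := by
        rw [← neg_sub, neg_pow]
      simp only [this]; ring
    have hpos : 0 < ∫ x in (0:ℝ)..1, x ^ n * (1 - x) ^ m := by
      apply intervalIntegral.intervalIntegral_pos_of_pos_on
      · exact (((continuous_pow n).mul ((continuous_const.sub continuous_id).pow m)).intervalIntegrable _ _)
      · intro x hx
        have h1 : 0 < x := hx.1
        have h2 : x < 1 := hx.2
        have h3 : (0:ℝ) < 1 - x := by linarith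
        positivity
      · norm_num
    rw [hsign]
    intro h
    have := mul_ne_zero (pow_ne_zero m (by norm_num : (-1:ℝ) ≠ 0)) (ne_of_gt hpos)
    exact this h
  refine ⟨by rw [hPb, hP0]; ring, hlam0, ?_⟩
  rw [hPb, hP0]
  intro h
  have : b ^ (n + m + 1) * lam = 0 := by linear_combination h
  exact (mul_ne_zero (pow_ne_zero _ hb) hlam0) this
end

section
/- Let n ≥ 4 and let P(z) = ((n-1)(n-2)/2)·z^n - n(n-2)·z^{n-1} + (n(n-1)/2)·z^{n-2} - c. Then P(z) - P(1) = (z-1)³·R₁(z) where R₁ is a polynomial with R₁(1) ≠ 0 and R₁ has no multiple zeros, and P(z) - P(0) = z^{n-2}·R₂(z) where R₂(0) ≠ 0 and R₂ has no multiple zeros. -/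
open Polynomial

theorem stmt_11 (n : ℕ) (hn : 4 ≤ n) (c : ℂ)
    (P : Polynomial ℂ)
    (hP : P = C (((n : ℂ) - 1) * ((n : ℂ) - 2) / 2) * X ^ n -
      C ((n : ℂ) * ((n : ℂ) - 2)) * X ^ (n - 1) +
      C ((n : ℂ) * ((n : ℂ) - 1) / 2) * X ^ (n - 2) - C c) :
    (∃ R₁ : Polynomial ℂ,
      P - C (P.eval 1) = (X - C 1) ^ 3 * R₁ ∧ R₁.eval 1 ≠ 0 ∧
      ∀ z : ℂ, ¬ (X - C z) ^ 2 ∣ R₁) ∧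
    (∃ R₂ : Polynomial ℂ,
      P - C (P.eval 0) = X ^ (n - 2) * R₂ ∧ R₂.eval 0 ≠ 0 ∧
      ∀ z : ℂ, ¬ (X - C z) ^ 2 ∣ R₂) := by
  obtain ⟨k, rfl⟩ : ∃ k, n = k + 4 := ⟨n - 4, by omega⟩
  clear hn
  set m : ℂ := (k : ℂ) + 4 with hm
  have hcast : ((k + 4 : ℕ) : ℂ) = m := by push_cast [hm]; ring
  have hm0 : m ≠ 0 := by
    rw [← hcast]; exact_mod_cast (by omega : (k + 4 : ℕ) ≠ 0)
  have hm1 : m - 1 ≠ 0 := by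
    intro h
    have h2 : ((k + 4 : ℕ) : ℂ) = ((1 : ℕ) : ℂ) := by
      rw [hcast]; push_cast; linear_combination h
    exact (by omega : (k + 4 : ℕ) ≠ 1) (Nat.cast_injective h2)
  have hm2 : m - 2 ≠ 0 := by
    intro h
    have h2 : ((k + 4 : ℕ) : ℂ) = ((2 : ℕ) : ℂ) := by
      rw [hcast]; push_cast; linear_combination h
    exact (by omega : (k + 4 : ℕ) ≠ 2) (Nat.cast_injective h2)
  have hexp1 : k + 4 - 1 = k + 3 := rfl
  have hexp2 : k + 4 - 2 = k + 2 := rfl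
  rw [hexp1, hexp2, hcast] at hP
  -- evaluations
  have hP1 : P.eval 1 = 1 - c := by
    subst hP; simp; ring
  have hP0 : P.eval 0 = -c := by
    subst hP; simp
  -- Part 2
  have part2 : ∃ R₂ : Polynomial ℂ,
      P - C (P.eval 0) = X ^ (k + 4 - 2) * R₂ ∧ R₂.eval 0 ≠ 0 ∧
      ∀ z : ℂ, ¬ (X - C z) ^ 2 ∣ R₂ := by
    refine ⟨C ((m - 1) * (m - 2) / 2) * X ^ 2 - C (m * (m - 2)) * X + C (m * (m - 1) / 2),
      ?_, ?_, ?_⟩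
    · rw [hexp2, hP0, hP]
      apply Polynomial.funext
      intro r
      simp
      ring
    · simp
      exact ⟨hm0, hm1⟩
    · intro z hzdvd
      obtain ⟨q, hq⟩ := hzdvd
      have h1 : (m - 1) * (m - 2) / 2 * z ^ 2 - m * (m - 2) * z + m * (m - 1) / 2 = 0 := by
        have := congrArg (Polynomial.eval z) hq
        simpa using this
      have h2 : 2 * ((m - 1) * (m - 2) / 2) * z - m * (m - 2) = 0 := by
        have := congrArg (fun p => Polynomial.eval z (Polynomial.derivative p)) hq
        simp [derivative_pow, derivative_mul] at this
        linear_combination this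
      have hcontra : m * (m - 2) = 0 := by
        linear_combination (m * (m - 2) - 2 * ((m - 1) * (m - 2) / 2) * z) * h2 +
          4 * ((m - 1) * (m - 2) / 2) * h1
      rcases mul_eq_zero.1 hcontra with h | h
      exacts [hm0 h, hm2 h]
  -- Part 1
  set K : ℂ := m * (m - 1) * (m - 2) / 2 with hK
  have hKne : K ≠ 0 := by
    rw [hK]
    exact div_ne_zero (mul_ne_zero (mul_ne_zero hm0 hm1) hm2) two_ne_zero
  set Q : Polynomial ℂ := P - C (P.eval 1) with hQ
  have hQ0 : Q.eval 0 = -1 := by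
    rw [hQ]; simp [hP0, hP1]; ring
  have hQne : Q ≠ 0 := by
    intro h; rw [h] at hQ0; simp at hQ0
  have hQ1 : Q.IsRoot 1 := by simp [hQ, IsRoot]
  have hdQ : derivative Q = C K * (X ^ (k + 1) * (X - C 1) ^ 2) := by
    rw [hQ, hP]
    apply Polynomial.funext
    intro r
    simp [derivative_pow]
    ring
  have hdmult : (derivative Q).rootMultiplicity 1 = 2 := by
    rw [hdQ]
    have hne1 : (C K : Polynomial ℂ) ≠ 0 := by simpa using hKne
    have hne2 : (X ^ (k + 1) * (X - C 1) ^ 2 : Polynomial ℂ) ≠ 0 := by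
      apply mul_ne_zero
      · exact pow_ne_zero _ X_ne_zero
      · exact pow_ne_zero _ (X_sub_C_ne_zero 1)
    rw [rootMultiplicity_mul (mul_ne_zero hne1 hne2),
      rootMultiplicity_mul hne2,
      rootMultiplicity_eq_zero (by simp [IsRoot, hKne]),
      rootMultiplicity_eq_zero (p := X ^ (k + 1)) (by simp [IsRoot]),
      rootMultiplicity_X_sub_C_pow]
  have hmult : Q.rootMultiplicity 1 = 3 := by
    have h := derivative_rootMultiplicity_of_root hQ1
    rw [hdmult] at h
    have hpos : 0 < Q.rootMultiplicity 1 := (rootMultiplicity_pos hQne).2 hQ1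
    omega
  set R₁ : Polynomial ℂ := Q /ₘ (X - C 1) ^ 3 with hR₁
  have hfact : Q = (X - C 1) ^ 3 * R₁ := by
    conv_lhs => rw [← pow_mul_divByMonic_rootMultiplicity_eq Q 1]
    rw [hmult]
  have hR₁1 : R₁.eval 1 ≠ 0 := by
    have := eval_divByMonic_pow_rootMultiplicity_ne_zero 1 hQne
    rwa [hmult] at this
  refine ⟨⟨R₁, hfact, hR₁1, ?_⟩, part2⟩
  intro z hzdvd
  by_cases hz1 : z = 1
  · subst hz1
    exact hR₁1 (dvd_iff_isRoot.1 (dvd_trans (dvd_pow_self _ two_ne_zero) hzdvd))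
  · have hdvdQ : (X - C z) ^ 2 ∣ Q := hfact ▸ Dvd.dvd.mul_left hzdvd _
    obtain ⟨q, hq⟩ := hdvdQ
    have hevalz : Q.eval z = 0 := by rw [hq]; simp
    have hderz : (derivative Q).eval z = 0 := by
      rw [hq]
      simp [derivative_mul, derivative_pow]
    rw [hdQ] at hderz
    simp at hderz
    rcases hderz with h | h | h
    · exact hKne h
    · subst h
      rw [hQ0] at hevalz
      norm_num at hevalz
    · exact hz1 (by linear_combination h)
end

section
/- Let m, n be positive integers, b ∈ ℂ with b ≠ 0, and P(z) = Σ_{i=0}^{m} C(m,i)·((-1)^i/(n+m+1-i))·z^{n+m+1-i}·b^i + 1. Then for any complex number d with d ∉ {P(0), P(b)}, the polynomial P(z) - d has exactly m + n + 1 distinct zeros (i.e., all its zeros are simple). -/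
open Polynomial

theorem stmt_18 (m n : ℕ) (hm : 0 < m) (hn : 0 < n) (b : ℂ) (hb : b ≠ 0)
    (P : Polynomial ℂ)
    (hP : P = (∑ i ∈ Finset.range (m + 1),
      C ((m.choose i : ℂ) * ((-1) ^ i / ((n + m + 1 - i : ℕ) : ℂ)) * b ^ i) *
        X ^ (n + m + 1 - i)) + 1)
    (d : ℂ) (hd0 : d ≠ P.eval 0) (hdb : d ≠ P.eval b) :
    (P - C d).roots.toFinset.card = m + n + 1 := by
  set Q : Polynomial ℂ := P - C d with hQ
  -- derivative of P
  have hP' : derivative P = X ^ n * (X - C b) ^ m := by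
    rw [hP, derivative_add, derivative_one, add_zero, derivative_sum]
    rw [sub_pow, Finset.mul_sum]
    rw [← Finset.sum_range_reflect (fun j => X ^ n *
      ((-1 : ℂ[X]) ^ (j + m) * X ^ j * (C b) ^ (m - j) * (m.choose j : ℂ[X])))]
    refine Finset.sum_congr rfl fun i hi => ?_
    rw [Finset.mem_range] at hi
    have him : i ≤ m := Nat.lt_succ_iff.mp hi
    have h1 : m + 1 - 1 - i = m - i := by omega
    rw [h1]
    have h2 : m - (m - i) = i := by omega
    have h3 : m.choose (m - i) = m.choose i := Nat.choose_symm him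
    rw [h2, h3]
    have h4 : ((-1 : ℂ[X]) ^ (m - i + m)) = (-1) ^ i := by
      rw [show m - i + m = i + 2 * (m - i) by omega, pow_add, pow_mul, neg_one_sq, one_pow,
        mul_one]
    rw [h4, derivative_C_mul_X_pow]
    have h5 : n + m + 1 - i - 1 = n + m - i := by omega
    have h6 : ((n + m + 1 - i : ℕ) : ℂ) ≠ 0 := by
      rw [Nat.cast_ne_zero]; omega
    rw [h5]
    have h7 : (m.choose i : ℂ) * ((-1) ^ i / ((n + m + 1 - i : ℕ) : ℂ)) * b ^ i *
        ((n + m + 1 - i : ℕ) : ℂ) = (m.choose i : ℂ) * (-1) ^ i * b ^ i := by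
      field_simp
    rw [h7]
    have h8 : X ^ n * ((-1 : ℂ[X]) ^ i * X ^ (m - i) * C b ^ i * (m.choose i : ℂ[X])) =
        C ((m.choose i : ℂ) * (-1) ^ i * b ^ i) * X ^ (n + (m - i)) := by
      rw [map_mul, map_mul, map_pow, map_pow, map_neg, map_one, C_eq_natCast, pow_add]
      ring
    rw [h8, show n + (m - i) = n + m - i by omega]
  -- coefficient of Q at degree n + m + 1
  have hcoeff : Q.coeff (n + m + 1) = 1 / ((n + m + 1 : ℕ) : ℂ) := by
    rw [hQ, hP]
    rw [coeff_sub, coeff_add, finset_sum_coeff]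
    have h1 : (1 : ℂ[X]).coeff (n + m + 1) = 0 := by
      rw [coeff_one, if_neg (by omega)]
    have h2 : (C d).coeff (n + m + 1) = 0 := by
      rw [coeff_C, if_neg (by omega)]
    rw [h1, h2, add_zero, sub_zero]
    rw [Finset.sum_eq_single 0]
    · simp
    · intro i hi hi0
      rw [Finset.mem_range] at hi
      rw [coeff_C_mul, coeff_X_pow, if_neg (by omega), mul_zero]
    · intro h; exact absurd (Finset.mem_range.mpr (by omega)) h
  have hcast : ((n + m + 1 : ℕ) : ℂ) ≠ 0 := by rw [Nat.cast_ne_zero]; omega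
  have hcoeffne : Q.coeff (n + m + 1) ≠ 0 := by
    rw [hcoeff]; exact one_div_ne_zero hcast
  have hQ0 : Q ≠ 0 := fun h => hcoeffne (by rw [h, coeff_zero])
  -- natDegree of Q
  have hdegle : Q.natDegree ≤ n + m + 1 := by
    rw [hQ, hP]
    refine le_trans (natDegree_sub_le _ _) (max_le (le_trans (natDegree_add_le _ _)
      (max_le ?_ (by simp))) (by simp))
    refine le_trans (natDegree_sum_le _ _) ?_
    rw [Finset.fold_max_le]
    refine ⟨by omega, fun i hi => ?_⟩
    refine le_trans (natDegree_C_mul_le _ _) ?_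
    rw [natDegree_X_pow]; omega
  have hdeg : Q.natDegree = n + m + 1 :=
    le_antisymm hdegle (le_natDegree_of_ne_zero hcoeffne)
  -- Q is separable
  have hQ' : derivative Q = X ^ n * (X - C b) ^ m := by
    rw [hQ, derivative_sub, derivative_C, sub_zero, hP']
  have hsep : Q.Separable := by
    rw [Polynomial.Separable, Polynomial.isCoprime_iff_aeval_ne_zero_of_isAlgClosed (k := ℂ) ℂ]
    intro a
    by_contra h
    push_neg at h
    obtain ⟨h1, h2⟩ := h
    rw [hQ', map_mul, map_pow, map_pow, map_sub, aeval_X, aeval_C, mul_eq_zero,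
      pow_eq_zero_iff (by omega), pow_eq_zero_iff (by omega), sub_eq_zero] at h2
    simp only [Algebra.algebraMap_self_apply] at h2
    have heval : P.eval a = d := by
      have h := h1
      rw [hQ, map_sub, aeval_C, sub_eq_zero, Algebra.algebraMap_self_apply] at h
      rw [← coe_aeval_eq_eval, h]
    rcases h2 with rfl | rfl
    · exact hd0 heval.symm
    · exact hdb heval.symm
  -- conclude
  have hsplit : Q.Splits := IsAlgClosed.splits Q
  rw [Multiset.toFinset_card_of_nodup (nodup_roots hsep),
    splits_iff_card_roots.mp hsplit, hdeg]
  omega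
end

section
/- Let n ≥ 3, A ∈ ℂ with A ≠ 0, A ≠ 1, λ = 4(1 - 1/(n-1)²), and ψ(t) = λ(t^{n-1} - A)² - 4(t^{n-2} - A)(t^n - A). Then ψ is a polynomial of degree exactly 2n - 2 with exactly 2n - 2 distinct complex roots. -/
open Polynomial

theorem stmt_19 (n : ℕ) (hn : 3 ≤ n) (A : ℂ) (hA0 : A ≠ 0) (hA1 : A ≠ 1)
    (lam : ℂ) (hlam : lam = 4 * (1 - 1 / ((n : ℂ) - 1) ^ 2))
    (ψ : Polynomial ℂ)
    (hψ : ψ = C lam * (X ^ (n - 1) - C A) ^ 2 - 4 * (X ^ (n - 2) - C A) * (X ^ n - C A)) :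
    ψ.natDegree = 2 * n - 2 ∧ ψ.roots.toFinset.card = 2 * n - 2 := by
  obtain ⟨k, rfl⟩ : ∃ k, n = k + 3 := ⟨n - 3, by omega⟩
  have e1 : k + 3 - 1 = k + 2 := rfl
  have e2 : k + 3 - 2 = k + 1 := rfl
  rw [e1, e2] at hψ
  set c : ℂ := lam - 4 with hcdef
  have hN : ((k : ℂ) + 2) ≠ 0 := by
    have : ((k + 2 : ℕ) : ℂ) ≠ 0 := Nat.cast_ne_zero.mpr (by omega)
    push_cast at this; exact this
  have hc : c = -4 / ((k : ℂ) + 2) ^ 2 := by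
    have e3 : ((k + 3 : ℕ) : ℂ) - 1 = (k : ℂ) + 2 := by push_cast; ring
    rw [hcdef, hlam, e3]
    field_simp
    ring
  have hcne : c ≠ 0 := by
    rw [hc]
    exact div_ne_zero (by norm_num) (pow_ne_zero _ hN)
  have hψ2 : ψ = C c * (X ^ (k + 2) - C A) ^ 2 + C (4 * A) * (X ^ (k + 1) * (X - 1) ^ 2) := by
    rw [hψ, hcdef]
    simp only [map_sub, map_mul, map_ofNat]
    ring
  -- degree computation
  have hdeg : ψ.natDegree = 2 * k + 4 := by
    rw [hψ2]
    have h1d : (C c * (X ^ (k + 2) - C A) ^ 2).natDegree = 2 * k + 4 := by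
      rw [natDegree_C_mul hcne, natDegree_pow, natDegree_X_pow_sub_C]
      omega
    have h2d : (C (4 * A) * (X ^ (k + 1) * (X - 1) ^ 2)).natDegree < 2 * k + 4 := by
      calc (C (4 * A) * (X ^ (k + 1) * (X - 1) ^ 2)).natDegree
          ≤ (X ^ (k + 1) * (X - 1) ^ 2 : ℂ[X]).natDegree := natDegree_C_mul_le _ _
        _ ≤ (X ^ (k + 1) : ℂ[X]).natDegree + ((X - 1 : ℂ[X]) ^ 2).natDegree := natDegree_mul_le
        _ ≤ (k + 1) + 2 := by
            have hb : ((X - 1 : ℂ[X]) ^ 2).natDegree ≤ 2 := by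
              calc ((X - 1 : ℂ[X]) ^ 2).natDegree ≤ 2 * (X - 1 : ℂ[X]).natDegree :=
                    natDegree_pow_le
                _ ≤ 2 * 1 := by
                    have : (X - 1 : ℂ[X]).natDegree = 1 := by
                      rw [show (1 : ℂ[X]) = C 1 from (map_one C).symm, natDegree_X_sub_C]
                    omega
                _ = 2 := by norm_num
            rw [natDegree_X_pow]
            omega
        _ < 2 * k + 4 := by omega
    rw [natDegree_add_eq_left_of_natDegree_lt (by rw [h1d]; exact h2d), h1d]
  have hψne : ψ ≠ 0 := by intro h; rw [h, natDegree_zero] at hdeg; omega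
  -- derivative
  have e4 : k + 2 - 1 = k + 1 := rfl
  have e5 : k + 1 - 1 = k := rfl
  have hd : ψ.derivative = C c * (2 * (X ^ (k + 2) - C A) * (C ((k : ℂ) + 2) * X ^ (k + 1)))
      + C (4 * A) * (C ((k : ℂ) + 1) * X ^ k * (X - 1) ^ 2 + X ^ (k + 1) * (2 * (X - 1))) := by
    rw [hψ2]
    simp only [derivative_add, derivative_mul, derivative_pow, derivative_X_pow, derivative_C,
      derivative_sub, derivative_X, derivative_one, e4, e5]
    push_cast
    simp only [map_ofNat]
    ring
  -- core: no common root of ψ and ψ'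
  have core : ∀ t : ℂ, ψ.eval t = 0 → ψ.derivative.eval t = 0 → False := by
    intro t hr hr'
    rw [hψ2] at hr
    rw [hd] at hr'
    simp only [eval_add, eval_mul, eval_pow, eval_sub, eval_C, eval_X, eval_one, eval_ofNat] at hr hr'
    -- t ≠ 0
    have ht0 : t ≠ 0 := by
      intro h
      rw [h] at hr
      simp only [zero_pow (show k + 2 ≠ 0 by omega), zero_pow (show k + 1 ≠ 0 by omega)] at hr
      have h2 : c * A ^ 2 = 0 := by linear_combination hr
      rcases mul_eq_zero.mp h2 with h3 | h3
      · exact hcne h3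
      · exact hA0 (pow_eq_zero_iff (by omega) |>.mp h3)
    have ht1 : t - 1 ≠ 0 := by
      intro h
      have h1 : t = 1 := by rwa [sub_eq_zero] at h
      rw [h1] at hr
      have h2 : c * (1 - A) ^ 2 = 0 := by linear_combination hr
      rcases mul_eq_zero.mp h2 with h3 | h3
      · exact hcne h3
      · exact hA1 (by have := pow_eq_zero_iff (n := 2) (by omega) |>.mp h3
                      have : A = 1 := by linear_combination -this
                      exact this)
    rw [hc] at hr hr'
    field_simp at hr hr'
    have h1' : (t ^ (k + 2) - A) ^ 2 = A * ((k : ℂ) + 2) ^ 2 * t ^ (k + 1) * (t - 1) ^ 2 := by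
      linear_combination (-1/4 : ℂ) * hr
    have hcan0 : ((k : ℂ) + 2) * (t ^ k * (2 * t * (t ^ (k + 2) - A)
        - A * ((k : ℂ) + 2) * (t - 1) * (((k : ℂ) + 3) * t - ((k : ℂ) + 1)))) = 0 := by
      linear_combination (-((k : ℂ) + 2) / 4) * hr'
    have hcan : t ^ k * (2 * t * (t ^ (k + 2) - A)
        - A * ((k : ℂ) + 2) * (t - 1) * (((k : ℂ) + 3) * t - ((k : ℂ) + 1))) = 0 :=
      (mul_eq_zero.mp hcan0).resolve_left hN
    have h2' : 2 * t * (t ^ (k + 2) - A)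
        = A * ((k : ℂ) + 2) * (t - 1) * (((k : ℂ) + 3) * t - ((k : ℂ) + 1)) := by
      rcases mul_eq_zero.mp hcan with h | h
      · exact absurd h (pow_ne_zero _ ht0)
      · linear_combination h
    have hz : A ^ 2 * ((k : ℂ) + 2) ^ 2 * ((k : ℂ) + 1) * ((k : ℂ) + 3) * (t - 1) ^ 4 = 0 := by
      linear_combination (-(4 * t ^ 2)) * h1' +
        (2 * t * (t ^ (k + 2) - A) + A * ((k : ℂ) + 2) * (t - 1) * (((k : ℂ) + 3) * t - ((k : ℂ) + 1))
          - 2 * A * ((k : ℂ) + 2) ^ 2 * (t - 1) ^ 2) * h2'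
    have hk1 : ((k : ℂ) + 1) ≠ 0 := by
      have : ((k + 1 : ℕ) : ℂ) ≠ 0 := Nat.cast_ne_zero.mpr (by omega)
      push_cast at this; exact this
    have hk3 : ((k : ℂ) + 3) ≠ 0 := by
      have : ((k + 3 : ℕ) : ℂ) ≠ 0 := Nat.cast_ne_zero.mpr (by omega)
      push_cast at this; exact this
    have := mul_ne_zero (mul_ne_zero (mul_ne_zero (mul_ne_zero
      (pow_ne_zero 2 hA0) (pow_ne_zero 2 hN)) hk1) hk3) (pow_ne_zero 4 ht1)
    exact this hz
  -- conclusion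
  have hnodup : ψ.roots.Nodup := by
    rw [Multiset.nodup_iff_count_le_one]
    intro a
    by_contra hcount
    push_neg at hcount
    have h2le : 2 ≤ rootMultiplicity a ψ := by
      rw [← count_roots]; omega
    have hdvd : (X - C a) ^ 2 ∣ ψ := (pow_dvd_pow _ h2le).trans (ψ.pow_rootMultiplicity_dvd a)
    obtain ⟨g, hg⟩ := hdvd
    have heval : ψ.eval a = 0 := by rw [hg]; simp
    have heval' : ψ.derivative.eval a = 0 := by
      rw [hg]
      simp [derivative_mul, derivative_pow]
    exact core a heval heval'
  have hcard : ψ.roots.card = 2 * k + 4 :=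
    (splits_iff_card_roots.mp (IsAlgClosed.splits ψ)).trans hdeg
  constructor
  · rw [hdeg]; omega
  · rw [Multiset.toFinset_card_of_nodup hnodup, hcard]; omega
end
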